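/- The integral 𝓘 = ∫_{−∞}^{∞} [ y e^{−y²}/(√π · erfc(y)) − χ_{(0,∞)}(y)(y² + 1/2) ] dy converges absolutely, i.e. the integrand is integrable on ℝ. -/

import Mathlib

open MeasureTheory

/-- The complementary error function `erfc y = (2/√π) ∫_y^∞ e^{-t²} dt`. -/
noncomputable def erfc (y : ℝ) : ℝ :=
  (2 / Real.sqrt Real.pi) * ∫ t in Set.Ioi y, Real.exp (-t ^ 2)

open Set Real Filter Topology

noncomputable def Eg (y : ℝ) : ℝ := ∫ t in Set.Ioi y, Real.exp (-t^2)

lemma exp_neg_sq_integrable : Integrable (fun t : ℝ => Real.exp (-t^2)) := by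
  simpa using integrable_exp_neg_mul_sq one_pos

lemma Eg_pos (y : ℝ) : 0 < Eg y := by
  rw [Eg, setIntegral_pos_iff_support_of_nonneg_ae]
  · have : Function.support (fun t : ℝ => Real.exp (-t^2)) = univ := by
      ext t; simp [Real.exp_ne_zero]
    rw [this, univ_inter]; simp
  · exact Filter.Eventually.of_forall fun t => (Real.exp_pos _).le
  · exact exp_neg_sq_integrable.integrableOn

lemma Eg_anti : Antitone Eg := fun a b hab => by
  apply setIntegral_mono_set exp_neg_sq_integrable.integrableOn
    (Filter.Eventually.of_forall fun t => (Real.exp_pos _).le)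
  exact HasSubset.Subset.eventuallyLE (Ioi_subset_Ioi hab)

lemma hd_exp (t : ℝ) : HasDerivAt (fun s : ℝ => Real.exp (-s^2)) (Real.exp (-t^2) * (-(2*t))) t := by
  have h1 : HasDerivAt (fun s : ℝ => -s^2) (-(2*t)) t := by
    simpa using ((hasDerivAt_pow 2 t).fun_neg)
  exact h1.exp

lemma hd_F1 {t : ℝ} (ht : t ≠ 0) :
    HasDerivAt (fun s : ℝ => -(Real.exp (-s^2)/(2*s)))
      (Real.exp (-t^2) + Real.exp (-t^2)/(2*t^2)) t := by
  have h2 : HasDerivAt (fun s : ℝ => 2*s) 2 t := by simpa using (hasDerivAt_id t).const_mul 2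
  have h : HasDerivAt (fun s : ℝ => Real.exp (-s^2)/(2*s))
      ((Real.exp (-t^2) * (-(2*t)) * (2*t) - Real.exp (-t^2) * 2)/(2*t)^2) t :=
    (hd_exp t).div h2 (by simpa using ht)
  refine h.fun_neg.congr_deriv ?_
  field_simp
  ring

lemma hd_F2 {t : ℝ} (ht : t ≠ 0) :
    HasDerivAt (fun s : ℝ => -(Real.exp (-s^2) * (2*s^2-1)/(4*s^3)))
      (Real.exp (-t^2) - Real.exp (-t^2)*3/(4*t^4)) t := by
  have hnum : HasDerivAt (fun s : ℝ => Real.exp (-s^2) * (2*s^2-1))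
      (Real.exp (-t^2) * (-(2*t)) * (2*t^2-1) + Real.exp (-t^2) * (4*t)) t := by
    have h1 : HasDerivAt (fun s : ℝ => 2*s^2-1) (4*t) t := by
      have := ((hasDerivAt_pow 2 t).const_mul 2).sub_const 1
      refine this.congr_deriv ?_
      ring
    exact (hd_exp t).mul h1
  have hden : HasDerivAt (fun s : ℝ => 4*s^3) (12*t^2) t := by
    have := (hasDerivAt_pow 3 t).const_mul 4
    norm_num at this
    refine this.congr_deriv ?_; ring
  have h := (hnum.div hden (mul_ne_zero (by norm_num) (pow_ne_zero _ ht))).fun_neg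
  refine h.congr_deriv ?_
  field_simp
  ring

lemma tends_exp : Tendsto (fun t : ℝ => Real.exp (-t^2)) atTop (𝓝 0) := by
  apply Real.tendsto_exp_atBot.comp
  rw [tendsto_neg_atBot_iff]
  exact tendsto_pow_atTop (two_ne_zero)

lemma tends_F1 : Tendsto (fun t : ℝ => -(Real.exp (-t^2)/(2*t))) atTop (𝓝 0) := by
  have h2 : Tendsto (fun t : ℝ => 2*t) atTop atTop := tendsto_id.const_mul_atTop two_pos
  have h1 : Tendsto (fun t : ℝ => Real.exp (-t^2) * (2*t)⁻¹) atTop (𝓝 (0 * 0)) :=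
    tends_exp.mul h2.inv_tendsto_atTop
  simpa [div_eq_mul_inv] using h1.neg

lemma tends_F2 : Tendsto (fun t : ℝ => -(Real.exp (-t^2) * (2*t^2-1)/(4*t^3))) atTop (𝓝 0) := by
  have h : Tendsto (fun t : ℝ => Real.exp (-t^2) * (2*t^2-1)/(4*t^3)) atTop (𝓝 0) := by
    apply squeeze_zero' (g := fun t : ℝ => Real.exp (-t^2)) ?_ ?_ tends_exp
    · filter_upwards [eventually_ge_atTop (1:ℝ)] with t ht
      have h0 : (0:ℝ) < t := by linarith
      have h1 : (0:ℝ) ≤ 2*t^2-1 := by nlinarith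
      positivity
    · filter_upwards [eventually_ge_atTop (1:ℝ)] with t ht
      have ht0 : (0:ℝ) < t := by linarith
      rw [div_le_iff₀ (by positivity)]
      have hb : 2*t^2-1 ≤ 4*t^3 := by nlinarith [sq_nonneg t, sq_nonneg (t-1)]
      nlinarith [Real.exp_pos (-t^2)]
  simpa using h.neg

lemma I1_integrable {y : ℝ} (hy : 0 < y) :
    IntegrableOn (fun t : ℝ => Real.exp (-t^2)/(2*t^2)) (Ioi y) := by
  apply Integrable.mono' (g := fun t : ℝ => Real.exp (-t^2) * (2*y^2)⁻¹)
    (exp_neg_sq_integrable.mul_const _).integrableOn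
  · apply Measurable.aestronglyMeasurable
    fun_prop
  · rw [ae_restrict_iff' measurableSet_Ioi]
    apply Filter.Eventually.of_forall
    intro t ht
    have ht0 : 0 < t := hy.trans ht
    have hty : y ≤ t := le_of_lt ht
    rw [Real.norm_eq_abs, abs_of_nonneg (by positivity), div_eq_mul_inv]
    have h2 : (2*t^2)⁻¹ ≤ (2*y^2)⁻¹ := by
      apply inv_anti₀ (by positivity)
      nlinarith
    exact mul_le_mul_of_nonneg_left h2 (Real.exp_pos _).le

lemma I2_integrable {y : ℝ} (hy : 0 < y) :
    IntegrableOn (fun t : ℝ => Real.exp (-t^2)*3/(4*t^4)) (Ioi y) := by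
  apply Integrable.mono' (g := fun t : ℝ => Real.exp (-t^2) * (3 * (4*y^4)⁻¹))
    (exp_neg_sq_integrable.mul_const _).integrableOn
  · apply Measurable.aestronglyMeasurable
    fun_prop
  · rw [ae_restrict_iff' measurableSet_Ioi]
    apply Filter.Eventually.of_forall
    intro t ht
    have ht0 : 0 < t := hy.trans ht
    have hty : y ≤ t := le_of_lt ht
    have ht4 : y^4 ≤ t^4 := pow_le_pow_left₀ hy.le hty 4
    rw [Real.norm_eq_abs, abs_of_nonneg (by positivity), div_eq_mul_inv, mul_assoc]
    have h2 : (4*t^4)⁻¹ ≤ (4*y^4)⁻¹ := by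
      apply inv_anti₀ (by positivity)
      nlinarith
    have h3 : 3*(4*t^4)⁻¹ ≤ 3*(4*y^4)⁻¹ := by linarith
    exact mul_le_mul_of_nonneg_left h3 (Real.exp_pos _).le

lemma id1 {y : ℝ} (hy : 0 < y) :
    Eg y + (∫ t in Ioi y, Real.exp (-t^2)/(2*t^2)) = Real.exp (-y^2)/(2*y) := by
  have key : (∫ t in Ioi y, (Real.exp (-t^2) + Real.exp (-t^2)/(2*t^2)))
      = 0 - (-(Real.exp (-y^2)/(2*y))) := by
    apply integral_Ioi_of_hasDerivAt_of_tendsto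
      ((hd_F1 hy.ne').continuousAt).continuousWithinAt
      (fun x hx => hd_F1 (hy.trans hx).ne')
      ((exp_neg_sq_integrable.integrableOn).add (I1_integrable hy)) tends_F1
  rw [integral_add exp_neg_sq_integrable.integrableOn (I1_integrable hy)] at key
  rw [Eg]
  linarith [key]

lemma id2 {y : ℝ} (hy : 0 < y) :
    Eg y - (∫ t in Ioi y, Real.exp (-t^2)*3/(4*t^4))
      = Real.exp (-y^2) * (2*y^2-1)/(4*y^3) := by
  have key : (∫ t in Ioi y, (Real.exp (-t^2) - Real.exp (-t^2)*3/(4*t^4)))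
      = 0 - (-(Real.exp (-y^2) * (2*y^2-1)/(4*y^3))) := by
    apply integral_Ioi_of_hasDerivAt_of_tendsto
      ((hd_F2 hy.ne').continuousAt).continuousWithinAt
      (fun x hx => hd_F2 (hy.trans hx).ne')
      ((exp_neg_sq_integrable.integrableOn).sub (I2_integrable hy)) tends_F2
  rw [integral_sub exp_neg_sq_integrable.integrableOn (I2_integrable hy)] at key
  rw [Eg]
  linarith [key]

lemma I1_bounds {y : ℝ} (hy : 0 < y) :
    0 ≤ (∫ t in Ioi y, Real.exp (-t^2)/(2*t^2)) ∧
    (∫ t in Ioi y, Real.exp (-t^2)/(2*t^2)) ≤ (2*y^2)⁻¹ * Eg y := by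
  constructor
  · apply setIntegral_nonneg measurableSet_Ioi
    intro t ht
    have : 0 < t := hy.trans ht
    positivity
  · rw [Eg, ← integral_const_mul]
    apply setIntegral_mono_on (I1_integrable hy)
      ((exp_neg_sq_integrable.integrableOn).const_mul _) measurableSet_Ioi
    intro t ht
    have ht0 : 0 < t := hy.trans ht
    rw [div_eq_mul_inv, mul_comm]
    have h2 : (2*t^2)⁻¹ ≤ (2*y^2)⁻¹ := by
      apply inv_anti₀ (by positivity)
      nlinarith [le_of_lt (mem_Ioi.mp ht)]
    exact mul_le_mul_of_nonneg_right h2 (Real.exp_pos _).le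

lemma I2_bounds {y : ℝ} (hy : 0 < y) :
    0 ≤ (∫ t in Ioi y, Real.exp (-t^2)*3/(4*t^4)) ∧
    (∫ t in Ioi y, Real.exp (-t^2)*3/(4*t^4)) ≤ (3*(4*y^4)⁻¹) * Eg y := by
  constructor
  · apply setIntegral_nonneg measurableSet_Ioi
    intro t ht
    have : 0 < t := hy.trans ht
    positivity
  · rw [Eg, ← integral_const_mul]
    apply setIntegral_mono_on (I2_integrable hy)
      ((exp_neg_sq_integrable.integrableOn).const_mul _) measurableSet_Ioi
    intro t ht
    have ht0 : 0 < t := hy.trans ht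
    have h2 : (4*t^4)⁻¹ ≤ (4*y^4)⁻¹ := by
      apply inv_anti₀ (by positivity)
      have : y^4 ≤ t^4 := pow_le_pow_left₀ hy.le (le_of_lt ht) 4
      linarith
    rw [div_eq_mul_inv]
    calc Real.exp (-t^2) * 3 * (4*t^4)⁻¹ ≤ Real.exp (-t^2) * 3 * (4*y^4)⁻¹ := by
          exact mul_le_mul_of_nonneg_left h2 (by positivity)
      _ = 3*(4*y^4)⁻¹ * Real.exp (-t^2) := by ring

-- Lower bound on Eg for all y > 0 : Eg y ≥ y e^{-y²}/(2y²+1)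
lemma Eg_lower {y : ℝ} (hy : 0 < y) :
    y * Real.exp (-y^2) ≤ (2*y^2+1) * Eg y := by
  have h1 := id1 hy
  have h2 := (I1_bounds hy).2
  have hE := Eg_pos y
  have hy2 : (0:ℝ) < 2*y^2 := by positivity
  -- Eg y + I1 = e/(2y), I1 ≤ Eg/(2y²)
  have : Real.exp (-y^2)/(2*y) ≤ Eg y + (2*y^2)⁻¹ * Eg y := by linarith
  rw [div_le_iff₀ (by positivity)] at this
  have hinv : (2*y^2)⁻¹ * (2*y^2) = 1 := inv_mul_cancel₀ (by positivity)
  nlinarith [this]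

-- Upper bound on Eg for all y > 0 : Eg y ≤ e^{-y²}/(2y), i.e. 2y·Eg ≤ e^{-y²}
lemma Eg_upper {y : ℝ} (hy : 0 < y) : 2*y * Eg y ≤ Real.exp (-y^2) := by
  have h1 := id1 hy
  have h2 := (I1_bounds hy).1
  have : Eg y ≤ Real.exp (-y^2)/(2*y) := by linarith
  rw [le_div_iff₀ (by positivity)] at this
  linarith

-- Sharper upper bound for y ≥ 1 : Eg y (4y⁴ - 3) ≤ e^{-y²} y (2y²-1)
lemma Eg_upper' {y : ℝ} (hy : 1 ≤ y) :
    Eg y * (4*y^4 - 3) ≤ Real.exp (-y^2) * (y * (2*y^2-1)) := by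
  have hy0 : (0:ℝ) < y := by linarith
  have h1 := id2 hy0
  have h2 := (I2_bounds hy0).2
  have hE := Eg_pos y
  -- Eg - I2 = e(2y²-1)/(4y³), I2 ≤ 3 Eg/(4y⁴)
  have h3 : Eg y - (3*(4*y^4)⁻¹) * Eg y ≤ Real.exp (-y^2) * (2*y^2-1)/(4*y^3) := by linarith
  have h4 : Eg y * (1 - 3*(4*y^4)⁻¹) * (4*y^4) ≤ Real.exp (-y^2) * (2*y^2-1)/(4*y^3) * (4*y^4) := by
    apply mul_le_mul_of_nonneg_right _ (by positivity)
    calc Eg y * (1 - 3*(4*y^4)⁻¹) = Eg y - (3*(4*y^4)⁻¹) * Eg y := by ring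
      _ ≤ _ := h3
  have hinv : (4*y^4)⁻¹ * (4*y^4) = 1 := inv_mul_cancel₀ (by positivity)
  have hy3 : (4*y^3) ≠ 0 := by positivity
  calc Eg y * (4*y^4 - 3) = Eg y * (1 - 3*(4*y^4)⁻¹) * (4*y^4) := by
        field_simp
        try ring
    _ ≤ Real.exp (-y^2) * (2*y^2-1)/(4*y^3) * (4*y^4) := h4
    _ = Real.exp (-y^2) * (y * (2*y^2-1)) := by
        field_simp
        try ring

lemma g_le {y : ℝ} (hy : 0 < y) :
    y * Real.exp (-y^2) / (2 * Eg y) ≤ y^2 + 1/2 := by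
  have hE := Eg_pos y
  rw [div_le_iff₀ (by positivity)]
  have := Eg_lower hy
  nlinarith [this]

lemma g_ge {y : ℝ} (hy : 0 < y) :
    y^2 ≤ y * Real.exp (-y^2) / (2 * Eg y) := by
  have hE := Eg_pos y
  rw [le_div_iff₀ (by positivity)]
  have := Eg_upper hy
  nlinarith [this]

lemma Eg_key {y : ℝ} (hy : 1 ≤ y) :
    (2*y^4+y^2-2) * Eg y ≤ y^3 * Real.exp (-y^2) := by
  have hy0 : (0:ℝ) < y := by linarith
  have hE := Eg_pos y
  have hU := Eg_upper' hy
  have hy2 : (1:ℝ) ≤ y^2 := by nlinarith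
  have hy4 : (1:ℝ) ≤ y^4 := by nlinarith [sq_nonneg (y^2-1)]
  have h43 : (0:ℝ) < 4*y^4-3 := by nlinarith
  have h5 : (0:ℝ) ≤ 2*y^4+y^2-2 := by nlinarith
  have hA : (2*y^4+y^2-2) * (Eg y * (4*y^4-3))
      ≤ (2*y^4+y^2-2) * (Real.exp (-y^2) * (y*(2*y^2-1))) :=
    mul_le_mul_of_nonneg_left hU h5
  have hp : (2*y^4+y^2-2) * (y*(2*y^2-1)) ≤ y^3*(4*y^4-3) := by nlinarith [hy2, hy4, hy0.le, mul_le_mul_of_nonneg_left hy2 hy0.le]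
  have hB : (2*y^4+y^2-2) * (Real.exp (-y^2) * (y*(2*y^2-1)))
      ≤ y^3 * Real.exp (-y^2) * (4*y^4-3) := by
    have := mul_le_mul_of_nonneg_left hp (Real.exp_pos (-y^2)).le
    nlinarith [this]
  have key : (2*y^4+y^2-2) * Eg y * (4*y^4-3) ≤ y^3 * Real.exp (-y^2) * (4*y^4-3) := by
    nlinarith [hA, hB]
  exact le_of_mul_le_mul_right key h43

lemma g_ge' {y : ℝ} (hy : 1 ≤ y) :
    y^2 + 1/2 - (y^2)⁻¹ ≤ y * Real.exp (-y^2) / (2 * Eg y) := by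
  have hy0 : (0:ℝ) < y := by linarith
  have hE := Eg_pos y
  have key := Eg_key hy
  rw [le_div_iff₀ (by positivity)]
  have hy2 : (0:ℝ) < y^2 := by positivity
  rw [← mul_le_mul_iff_of_pos_right hy2]
  calc (y^2+1/2-(y^2)⁻¹)*(2*Eg y)*y^2 = (2*y^4+y^2-2)*Eg y := by
        field_simp
    _ ≤ y^3*Real.exp (-y^2) := key
    _ = y*Real.exp (-y^2)*y^2 := by ring

lemma sqrtpi_erfc (y : ℝ) : Real.sqrt Real.pi * erfc y = 2 * Eg y := by
  have h : Real.sqrt Real.pi ≠ 0 := (Real.sqrt_pos.mpr Real.pi_pos).ne'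
  rw [erfc, Eg, ← mul_assoc]
  congr 1
  field_simp

lemma main_aux : Integrable (fun y : ℝ =>
    y * Real.exp (-y^2) / (2 * Eg y) - (Set.Ioi (0:ℝ)).indicator (fun y => y^2 + 1/2) y) := by
  set F : ℝ → ℝ := fun y =>
    y * Real.exp (-y^2) / (2 * Eg y) - (Set.Ioi (0:ℝ)).indicator (fun y => y^2 + 1/2) y with hF
  have Fmeas : Measurable F := by
    apply Measurable.sub
    · apply Measurable.div
      · fun_prop
      · exact Eg_anti.measurable.const_mul 2
    · exact Measurable.indicator (by fun_prop) measurableSet_Ioi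
  have hxex : Integrable fun x : ℝ => x * Real.exp (-x^2) := by
    simpa using integrable_mul_exp_neg_mul_sq one_pos
  have hIic : IntegrableOn F (Iic 0) := by
    apply Integrable.mono' (g := fun y : ℝ => |y * Real.exp (-y^2)| * (2 * Eg 0)⁻¹)
      (hxex.abs.mul_const _).integrableOn
      Fmeas.aestronglyMeasurable.restrict
    rw [ae_restrict_iff' measurableSet_Iic]
    apply Filter.Eventually.of_forall
    intro y hy
    have hy0 : y ≤ 0 := hy
    have hEy := Eg_pos y
    have hE0 := Eg_pos 0
    have hmono : Eg 0 ≤ Eg y := Eg_anti hy0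
    have hind : (Set.Ioi (0:ℝ)).indicator (fun y => y^2 + 1/2) y = 0 :=
      Set.indicator_of_notMem (by simpa using hy0) _
    rw [hF]
    simp only [hind, sub_zero, Real.norm_eq_abs, abs_div]
    rw [abs_of_pos (by positivity : (0:ℝ) < 2 * Eg y), div_eq_mul_inv]
    apply mul_le_mul_of_nonneg_left _ (abs_nonneg _)
    apply inv_anti₀ (by positivity)
    linarith
  have hIoc : IntegrableOn F (Ioc 0 1) := by
    apply Integrable.mono' (g := fun _ : ℝ => (1/2 : ℝ))
      (integrableOn_const measure_Ioc_lt_top.ne enorm_ne_top)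
      Fmeas.aestronglyMeasurable.restrict
    rw [ae_restrict_iff' measurableSet_Ioc]
    apply Filter.Eventually.of_forall
    intro y hy
    have hy0 : 0 < y := hy.1
    have hind : (Set.Ioi (0:ℝ)).indicator (fun y => y^2 + 1/2) y = y^2 + 1/2 :=
      Set.indicator_of_mem (by simpa using hy0) _
    rw [hF]
    simp only [hind, Real.norm_eq_abs]
    rw [abs_le]
    constructor
    · linarith [g_ge hy0]
    · linarith [g_le hy0]
  have hIoi : IntegrableOn F (Ioi 1) := by
    apply Integrable.mono' (g := fun y : ℝ => y ^ (-2 : ℝ))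
      (integrableOn_Ioi_rpow_of_lt (by norm_num) one_pos)
      Fmeas.aestronglyMeasurable.restrict
    rw [ae_restrict_iff' measurableSet_Ioi]
    apply Filter.Eventually.of_forall
    intro y hy
    have hy1 : (1:ℝ) ≤ y := le_of_lt hy
    have hy0 : 0 < y := by linarith
    have hind : (Set.Ioi (0:ℝ)).indicator (fun y => y^2 + 1/2) y = y^2 + 1/2 :=
      Set.indicator_of_mem (by simpa using hy0) _
    have hrpow : y ^ (-2 : ℝ) = (y^2)⁻¹ := by
      rw [show (-2 : ℝ) = -(2:ℕ) by norm_num, Real.rpow_neg hy0.le, Real.rpow_natCast]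
    rw [hF]
    simp only [hind, Real.norm_eq_abs]
    rw [hrpow, abs_le]
    constructor
    · linarith [g_ge' hy1]
    · have : (0:ℝ) < (y^2)⁻¹ := by positivity
      linarith [g_le hy0]
  have h1 : IntegrableOn F (Iic 1) := by
    rw [← Set.Iic_union_Ioc_eq_Iic (zero_le_one (α := ℝ))]
    exact hIic.union hIoc
  have h2 : IntegrableOn F (Iic 1 ∪ Ioi 1) := h1.union hIoi
  rw [Set.Iic_union_Ioi] at h2
  rw [← integrableOn_univ]
  exact h2

theorem integrand_I_integrable :
    Integrable (fun y : ℝ =>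
      y * Real.exp (-y ^ 2) / (Real.sqrt Real.pi * erfc y)
        - Set.indicator (Set.Ioi (0 : ℝ)) (fun y => y ^ 2 + 1 / 2) y) := by
  have h := main_aux
  have heq : (fun y : ℝ =>
      y * Real.exp (-y ^ 2) / (Real.sqrt Real.pi * erfc y)
        - Set.indicator (Set.Ioi (0 : ℝ)) (fun y => y ^ 2 + 1 / 2) y)
      = fun y : ℝ =>
      y * Real.exp (-y^2) / (2 * Eg y) - (Set.Ioi (0:ℝ)).indicator (fun y => y^2 + 1/2) y := by
    funext y
    rw [sqrtpi_erfc]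
  rw [heq]
  exact h
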